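/- Let H : (0,∞) × (ℝ² ∖ {(0,0)}) → ℝ, written H(u,x,y), be continuously differentiable and satisfy both u·∂_uH(u,x,y) + 2H(u,x,y) = 0 and x·∂_yH(u,x,y) − y·∂_xH(u,x,y) = 0 for all u > 0 and (x,y) ≠ (0,0). Then there exists a function H₀ : (0,∞) → ℝ such that H(u,x,y) = H₀(√(x²+y²)) / u² for all u > 0 and (x,y) ≠ (0,0). -/

import Mathlib

open Set

/-- Case 5: pp-wave profile invariant under u∂_u − v∂_v and ∂_θ. -/
theorem ppwave_case5_invariance
    (H : ℝ → ℝ → ℝ → ℝ)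
    (hH : ContDiffOn ℝ 1 (fun p : ℝ × ℝ × ℝ => H p.1 p.2.1 p.2.2)
      {p : ℝ × ℝ × ℝ | 0 < p.1 ∧ (p.2.1, p.2.2) ≠ ((0 : ℝ), (0 : ℝ))})
    (hpde1 : ∀ u x y : ℝ, 0 < u → (x, y) ≠ ((0 : ℝ), (0 : ℝ)) →
      u * deriv (fun u' => H u' x y) u + 2 * H u x y = 0)
    (hpde2 : ∀ u x y : ℝ, 0 < u → (x, y) ≠ ((0 : ℝ), (0 : ℝ)) →
      x * deriv (fun y' => H u x y') y - y * deriv (fun x' => H u x' y) x = 0) :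
    ∃ H₀ : ℝ → ℝ, ∀ u x y : ℝ, 0 < u → (x, y) ≠ ((0 : ℝ), (0 : ℝ)) →
      H u x y = H₀ (Real.sqrt (x ^ 2 + y ^ 2)) / u ^ 2 := by
  classical
  set G : ℝ × ℝ × ℝ → ℝ := fun p => H p.1 p.2.1 p.2.2 with hGdef
  set S : Set (ℝ × ℝ × ℝ) :=
    {p : ℝ × ℝ × ℝ | 0 < p.1 ∧ (p.2.1, p.2.2) ≠ ((0 : ℝ), (0 : ℝ))} with hSdef
  have hSopen : IsOpen S := by
    have h1 : IsOpen {p : ℝ × ℝ × ℝ | 0 < p.1} := isOpen_lt continuous_const continuous_fst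
    have h2 : IsOpen {p : ℝ × ℝ × ℝ | (p.2.1, p.2.2) ≠ ((0 : ℝ), (0 : ℝ))} := by
      have : Continuous fun p : ℝ × ℝ × ℝ => (p.2.1, p.2.2) :=
        (continuous_fst.comp continuous_snd).prodMk (continuous_snd.comp continuous_snd)
      exact isOpen_compl_singleton.preimage this
    exact h1.inter h2
  have hF : ∀ p ∈ S, HasFDerivAt G (fderiv ℝ G p) p := by
    intro p hp
    exact ((hH.contDiffAt (hSopen.mem_nhds hp)).differentiableAt one_ne_zero).hasFDerivAt
  -- partial derivatives
  have hu : ∀ p ∈ S, HasDerivAt (fun u' => H u' p.2.1 p.2.2) (fderiv ℝ G p (1, 0, 0)) p.1 := by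
    intro p hp
    have h1 : HasDerivAt (fun u' : ℝ => (u', p.2.1, p.2.2)) ((1 : ℝ), (0 : ℝ), (0 : ℝ)) p.1 :=
      (hasDerivAt_id p.1).prodMk (hasDerivAt_const _ _)
    have := (hF p hp).comp_hasDerivAt p.1 (by simpa using h1)
    simpa [hGdef, Function.comp_def] using this
  have hx : ∀ p ∈ S, HasDerivAt (fun x' => H p.1 x' p.2.2) (fderiv ℝ G p (0, 1, 0)) p.2.1 := by
    intro p hp
    have h1 : HasDerivAt (fun x' : ℝ => (p.1, x', p.2.2)) ((0 : ℝ), (1 : ℝ), (0 : ℝ)) p.2.1 :=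
      (hasDerivAt_const _ _).prodMk ((hasDerivAt_id _).prodMk (hasDerivAt_const _ _))
    have := (hF p hp).comp_hasDerivAt p.2.1 (by simpa using h1)
    simpa [hGdef, Function.comp_def] using this
  have hy : ∀ p ∈ S, HasDerivAt (fun y' => H p.1 p.2.1 y') (fderiv ℝ G p (0, 0, 1)) p.2.2 := by
    intro p hp
    have h1 : HasDerivAt (fun y' : ℝ => (p.1, p.2.1, y')) ((0 : ℝ), (0 : ℝ), (1 : ℝ)) p.2.2 :=
      (hasDerivAt_const _ _).prodMk ((hasDerivAt_const _ _).prodMk (hasDerivAt_id _))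
    have := (hF p hp).comp_hasDerivAt p.2.2 (by simpa using h1)
    simpa [hGdef, Function.comp_def] using this
  -- Step 1: scaling in u
  have step1 : ∀ u x y : ℝ, 0 < u → (x, y) ≠ ((0 : ℝ), (0 : ℝ)) →
      H u x y = H 1 x y / u ^ 2 := by
    intro u x y hu0 hxy
    have hmemS : ∀ u' : ℝ, 0 < u' → ((u', x, y) : ℝ × ℝ × ℝ) ∈ S := fun u' h => ⟨h, hxy⟩
    set f : ℝ → ℝ := fun u' => u' ^ 2 * H u' x y with hfdef
    have hf' : ∀ u' ∈ Ioi (0 : ℝ), HasDerivAt f 0 u' := by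
      intro u' hu'
      have h1 := hu (u', x, y) (hmemS u' hu')
      have h2 : HasDerivAt f (2 * u' ^ 1 * H u' x y + u' ^ 2 * fderiv ℝ G (u', x, y) (1, 0, 0)) u' := by
        simpa [hfdef, Pi.mul_def] using (hasDerivAt_pow 2 u').mul h1
      have hd : deriv (fun u'' => H u'' x y) u' = fderiv ℝ G (u', x, y) (1, 0, 0) := h1.deriv
      have hpde := hpde1 u' x y hu' hxy
      rw [hd] at hpde
      have : 2 * u' ^ 1 * H u' x y + u' ^ 2 * fderiv ℝ G (u', x, y) (1, 0, 0) = 0 := by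
        linear_combination u' * hpde
      rwa [this] at h2
    have hconst : f u = f 1 := by
      have hconv : Convex ℝ (Ioi (0 : ℝ)) := convex_Ioi 0
      have hdiff : DifferentiableOn ℝ f (Ioi 0) := fun z hz => ((hf' z hz).differentiableAt).differentiableWithinAt
      have hzero : ∀ z ∈ Ioi (0 : ℝ), fderivWithin ℝ f (Ioi 0) z = 0 := by
        intro z hz
        rw [fderivWithin_of_isOpen isOpen_Ioi hz, (hf' z hz).hasFDerivAt.fderiv]
        ext
        simp
      exact hconv.is_const_of_fderivWithin_eq_zero hdiff hzero (mem_Ioi.2 hu0) (mem_Ioi.2 one_pos)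
    have : u ^ 2 * H u x y = 1 ^ 2 * H 1 x y := hconst
    field_simp at this ⊢
    linarith
  -- Step 2: rotation invariance at u = 1
  have step2 : ∀ x y : ℝ, (x, y) ≠ ((0 : ℝ), (0 : ℝ)) →
      H 1 x y = H 1 (Real.sqrt (x ^ 2 + y ^ 2)) 0 := by
    intro x y hxy
    set r : ℝ := Real.sqrt (x ^ 2 + y ^ 2) with hrdef
    have hx2y2 : 0 < x ^ 2 + y ^ 2 := by
      by_contra hle
      push_neg at hle
      have hx0 : x = 0 := by nlinarith [sq_nonneg x, sq_nonneg y]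
      have hy0 : y = 0 := by nlinarith [sq_nonneg x, sq_nonneg y]
      exact hxy (by simp [hx0, hy0])
    have hr0 : 0 < r := Real.sqrt_pos.2 hx2y2
    have hr2 : r ^ 2 = x ^ 2 + y ^ 2 := Real.sq_sqrt hx2y2.le
    set g : ℝ → ℝ := fun θ => H 1 (r * Real.cos θ) (r * Real.sin θ) with hgdef
    have hmemS : ∀ θ : ℝ, ((1, r * Real.cos θ, r * Real.sin θ) : ℝ × ℝ × ℝ) ∈ S := by
      intro θ
      refine ⟨one_pos, ?_⟩
      intro hc
      have h1 : r * Real.cos θ = 0 := (Prod.mk.injEq _ _ _ _ ▸ hc).1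
      have h2 : r * Real.sin θ = 0 := (Prod.mk.injEq _ _ _ _ ▸ hc).2
      have := Real.sin_sq_add_cos_sq θ
      nlinarith [hr0]
    have hg' : ∀ θ : ℝ, HasDerivAt g 0 θ := by
      intro θ
      set p : ℝ × ℝ × ℝ := (1, r * Real.cos θ, r * Real.sin θ) with hpdef
      have hp : p ∈ S := hmemS θ
      have hinner : HasDerivAt (fun θ' : ℝ => ((1 : ℝ), r * Real.cos θ', r * Real.sin θ'))
          ((0 : ℝ), r * (-Real.sin θ), r * Real.cos θ) θ :=
        (hasDerivAt_const _ _).prodMk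
          (((Real.hasDerivAt_cos θ).const_mul r).prodMk ((Real.hasDerivAt_sin θ).const_mul r))
      have hcomp := (hF p hp).comp_hasDerivAt θ hinner
      have hlin : fderiv ℝ G p ((0 : ℝ), r * (-Real.sin θ), r * Real.cos θ)
          = (r * (-Real.sin θ)) * fderiv ℝ G p (0, 1, 0)
            + (r * Real.cos θ) * fderiv ℝ G p (0, 0, 1) := by
        have : ((0 : ℝ), r * (-Real.sin θ), r * Real.cos θ)
            = (r * (-Real.sin θ)) • ((0 : ℝ), (1 : ℝ), (0 : ℝ))
              + (r * Real.cos θ) • ((0 : ℝ), (0 : ℝ), (1 : ℝ)) := by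
          simp [Prod.ext_iff]
        rw [this, map_add, map_smul, map_smul]
        simp
      have hpde := hpde2 1 (r * Real.cos θ) (r * Real.sin θ) one_pos (hmemS θ).2
      have hdx : deriv (fun x' => H 1 x' (r * Real.sin θ)) (r * Real.cos θ)
          = fderiv ℝ G p (0, 1, 0) := (hx p hp).deriv
      have hdy : deriv (fun y' => H 1 (r * Real.cos θ) y') (r * Real.sin θ)
          = fderiv ℝ G p (0, 0, 1) := (hy p hp).deriv
      rw [hdx, hdy] at hpde
      have hzero : fderiv ℝ G p ((0 : ℝ), r * (-Real.sin θ), r * Real.cos θ) = 0 := by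
        rw [hlin]; linear_combination hpde
      rw [hzero] at hcomp
      simpa [hgdef, hGdef, hpdef, Function.comp_def] using hcomp
    have hgdiff : Differentiable ℝ g := fun θ => (hg' θ).differentiableAt
    have hgderiv : ∀ θ, deriv g θ = 0 := fun θ => (hg' θ).deriv
    -- find θ₀ with x = r cos θ₀, y = r sin θ₀
    set z : ℂ := ⟨x, y⟩ with hzdef
    have hzne : z ≠ 0 := by
      intro h
      apply hxy
      have hxr : x = 0 := by simpa using congrArg Complex.re h
      have hyr : y = 0 := by simpa using congrArg Complex.im h
      simp [hxr, hyr]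
    have habs : ‖z‖ = r := by
      rw [Complex.norm_def, Complex.normSq_mk]
      rw [hrdef]
      ring_nf
    have hcos : r * Real.cos (Complex.arg z) = x := by
      rw [← habs]; exact Complex.norm_mul_cos_arg z
    have hsin : r * Real.sin (Complex.arg z) = y := by
      rw [← habs]; exact Complex.norm_mul_sin_arg z
    have hconst : g (Complex.arg z) = g 0 := is_const_of_deriv_eq_zero hgdiff hgderiv _ _
    have h1 : g (Complex.arg z) = H 1 x y := by rw [hgdef]; simp only []; rw [hcos, hsin]
    have h2 : g 0 = H 1 r 0 := by simp [hgdef]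
    rw [← h1, hconst, h2]
  refine ⟨fun r => H 1 r 0, ?_⟩
  intro u x y hu0 hxy
  rw [step1 u x y hu0 hxy, step2 x y hxy]
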